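/- Let ω, C_1,...,C_r, X_1^n, X_2^n satisfy the conditions of the interactive communication Markov structure: ω independent of the i.i.d. pair sequence (X_1^n, X_2^n), C_i — (ω, C_{[1:i-1]}, X_1^n) — X_2^n for odd i, and C_i — (ω, C_{[1:i-1]}, X_2^n) — X_1^n for even i. Then for each q and each odd i, the Markov chain C_i — (ω, C_{[1:i-1]}, X_1^{q:n}, X_2^{1:q-1}) — X_{2,q} holds, i.e., I(C_i; X_{2,q} | ω, C_{[1:i-1]}, X_1^{q:n}, X_2^{1:q-1}) = 0. -/

import Mathlib

open Finset

set_option synthInstance.maxSize 2000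
set_option maxHeartbeats 1000000
set_option linter.unusedSectionVars false
set_option linter.unreachableTactic false
set_option linter.unusedTactic false

/-- Total variation distance between two pmfs on a finite set: half the ℓ¹ distance. -/
noncomputable def TV {α : Type*} [Fintype α] (p q : α → ℝ) : ℝ :=
  (∑ a, |p a - q a|) / 2

/-- Shannon entropy of a pmf. -/
noncomputable def ent {α : Type*} [Fintype α] (p : α → ℝ) : ℝ :=
  -∑ a, p a * Real.log (p a)

/-- Binary entropy function. -/
noncomputable def hb (t : ℝ) : ℝ := -t * Real.log t - (1 - t) * Real.log (1 - t)

/-- `p` is a probability mass function. -/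
def IsPMF {α : Type*} [Fintype α] (p : α → ℝ) : Prop :=
  (∀ a, 0 ≤ p a) ∧ ∑ a, p a = 1

/-- Pushforward pmf (distribution of the random variable `X` under `μ`). -/
noncomputable def pushf {Ω α : Type*} [Fintype Ω] [DecidableEq α]
    (μ : Ω → ℝ) (X : Ω → α) : α → ℝ :=
  fun a => ∑ ω ∈ Finset.univ.filter (fun ω => X ω = a), μ ω

/-- Entropy of a random variable `X` on a finite probability space with pmf `μ`. -/
noncomputable def Hent {Ω α : Type*} [Fintype Ω] [Fintype α] [DecidableEq α]
    (μ : Ω → ℝ) (X : Ω → α) : ℝ := ent (pushf μ X)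

/-- Conditional mutual information `I(A ; C | B)` of random variables on a finite
probability space with pmf `μ`, defined via entropies:
`I(A;C|B) = H(A,B) + H(B,C) - H(A,B,C) - H(B)`. -/
noncomputable def condMI {Ω α β γ : Type*} [Fintype Ω] [Fintype α] [Fintype β] [Fintype γ]
    [DecidableEq α] [DecidableEq β] [DecidableEq γ]
    (μ : Ω → ℝ) (A : Ω → α) (B : Ω → β) (C : Ω → γ) : ℝ :=
  Hent μ (fun ω => (A ω, B ω)) + Hent μ (fun ω => (B ω, C ω))
    - Hent μ (fun ω => (A ω, B ω, C ω)) - Hent μ B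


/- ===== auxiliary generic lemmas ===== -/
section generic
variable {Ω α β : Type*} [Fintype Ω] [DecidableEq α] [DecidableEq β]
  (μ : Ω → ℝ) (X : Ω → α)

lemma pushf_nonneg (hμ : ∀ ω, 0 ≤ μ ω) (a : α) : 0 ≤ pushf μ X a :=
  Finset.sum_nonneg fun ω _ => hμ ω

lemma pushf_sum [Fintype α] : ∑ a, pushf μ X a = ∑ ω, μ ω := by
  unfold pushf
  rw [Finset.sum_fiberwise_eq_sum_filter univ univ X μ]
  simp

lemma pushf_comp [Fintype α] (f : α → β) (b : β) :
    pushf μ (fun ω => f (X ω)) b = ∑ a ∈ univ.filter (fun a => f a = b), pushf μ X a := by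
  unfold pushf
  rw [Finset.sum_fiberwise_eq_sum_filter univ (univ.filter (fun a => f a = b)) X μ]
  apply Finset.sum_congr
  · ext ω; simp
  · intros; rfl

lemma pushf_comp_le (hμ : ∀ ω, 0 ≤ μ ω) (f : α → β) (x : α) :
    pushf μ X x ≤ pushf μ (fun ω => f (X ω)) (f x) := by
  apply Finset.sum_le_sum_of_subset_of_nonneg
  · intro ω hω
    simp only [mem_filter, mem_univ, true_and] at *
    rw [hω]
  · intro ω _ _; exact hμ ω

lemma pushf_inj (f : α → β) (hf : Function.Injective f) (x : α) :
    pushf μ (fun ω => f (X ω)) (f x) = pushf μ X x := by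
  unfold pushf
  apply Finset.sum_congr _ (fun _ _ => rfl)
  ext ω
  simp [hf.eq_iff]

end generic

section marg
variable {α β γ : Type*} [Fintype α] [Fintype β] [Fintype γ] [DecidableEq α] [DecidableEq β] [DecidableEq γ]

noncomputable def margAB (P : α × β × γ → ℝ) : α × β → ℝ := fun x => ∑ c, P (x.1, x.2, c)
noncomputable def margBC (P : α × β × γ → ℝ) : β × γ → ℝ := fun x => ∑ a, P (a, x.1, x.2)
noncomputable def margB (P : α × β × γ → ℝ) : β → ℝ := fun b => ∑ a, ∑ c, P (a, b, c)

lemma margAB_fiber (P : α × β × γ → ℝ) (a : α) (b : β) :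
    ∑ x ∈ univ.filter (fun x : α × β × γ => (x.1, x.2.1) = (a, b)), P x = margAB P (a, b) := by
  refine Finset.sum_nbij' (fun x => x.2.2) (fun c => (a, b, c)) ?_ ?_ ?_ ?_ ?_ <;>
    simp +contextual [Prod.ext_iff] <;> tauto

lemma margBC_fiber (P : α × β × γ → ℝ) (b : β) (c : γ) :
    ∑ x ∈ univ.filter (fun x : α × β × γ => (x.2.1, x.2.2) = (b, c)), P x = margBC P (b, c) := by
  refine Finset.sum_nbij' (fun x => x.1) (fun a => (a, b, c)) ?_ ?_ ?_ ?_ ?_ <;>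
    simp +contextual [Prod.ext_iff] <;> tauto

lemma margB_fiber (P : α × β × γ → ℝ) (b : β) :
    ∑ x ∈ univ.filter (fun x : α × β × γ => x.2.1 = b), P x = margB P b := by
  have : margB P b = ∑ y : α × γ, P (y.1, b, y.2) := by
    rw [Fintype.sum_prod_type]; rfl
  rw [this]
  refine Finset.sum_nbij' (fun x => (x.1, x.2.2)) (fun y => (y.1, b, y.2)) ?_ ?_ ?_ ?_ ?_ <;>
    simp +contextual [Prod.ext_iff] <;> tauto

variable {Ω : Type*} [Fintype Ω]
  (μ : Ω → ℝ) (A : Ω → α) (B : Ω → β) (C : Ω → γ)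

lemma pushf_AB : pushf μ (fun ω => (A ω, B ω))
    = margAB (pushf μ (fun ω => (A ω, B ω, C ω))) := by
  funext x
  obtain ⟨a, b⟩ := x
  rw [show (fun ω => (A ω, B ω)) = fun ω => (fun z : α × β × γ => (z.1, z.2.1)) ((A ω, B ω, C ω)) from rfl,
    pushf_comp μ _ (fun z : α × β × γ => (z.1, z.2.1)) (a, b), margAB_fiber]

lemma pushf_BC : pushf μ (fun ω => (B ω, C ω))
    = margBC (pushf μ (fun ω => (A ω, B ω, C ω))) := by
  funext x
  obtain ⟨b, c⟩ := x
  rw [show (fun ω => (B ω, C ω)) = fun ω => (fun z : α × β × γ => (z.2.1, z.2.2)) ((A ω, B ω, C ω)) from rfl,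
    pushf_comp μ _ (fun z : α × β × γ => (z.2.1, z.2.2)) (b, c), margBC_fiber]

lemma pushf_B : pushf μ B
    = margB (pushf μ (fun ω => (A ω, B ω, C ω))) := by
  funext b
  rw [show B = fun ω => (fun z : α × β × γ => z.2.1) ((A ω, B ω, C ω)) from rfl,
    pushf_comp μ _ (fun z : α × β × γ => z.2.1) b, margB_fiber]

lemma condMI_repr :
    condMI μ A B C = ent (margAB (pushf μ (fun ω => (A ω, B ω, C ω))))
      + ent (margBC (pushf μ (fun ω => (A ω, B ω, C ω))))
      - ent (pushf μ (fun ω => (A ω, B ω, C ω)))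
      - ent (margB (pushf μ (fun ω => (A ω, B ω, C ω)))) := by
  rw [condMI, Hent, Hent, Hent, Hent, pushf_AB μ A B C, pushf_BC μ A B C, pushf_B μ A B C]

end marg

section cmi
variable {α β γ : Type*} [Fintype α] [Fintype β] [Fintype γ]

lemma trip_sum (f : α × β × γ → ℝ) :
    ∑ x : α × β × γ, f x = ∑ a, ∑ b, ∑ c, f (a, b, c) := by
  rw [Fintype.sum_prod_type]
  exact Finset.sum_congr rfl fun a _ => Fintype.sum_prod_type _

lemma trip_sum_b (f : α × β × γ → ℝ) :
    ∑ x : α × β × γ, f x = ∑ b, ∑ a, ∑ c, f (a, b, c) := by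
  rw [trip_sum]; exact Finset.sum_comm

lemma cmi_eq_sum (P : α × β × γ → ℝ) :
    ent (margAB P) + ent (margBC P) - ent P - ent (margB P)
      = ∑ x : α × β × γ, P x * (Real.log (P x) + Real.log (margB P x.2.1)
          - Real.log (margAB P (x.1, x.2.1)) - Real.log (margBC P (x.2.1, x.2.2))) := by
  have hAB : ent (margAB P) = -∑ x : α × β × γ, P x * Real.log (margAB P (x.1, x.2.1)) := by
    rw [ent, trip_sum (fun x => P x * Real.log (margAB P (x.1, x.2.1))), Fintype.sum_prod_type]
    congr 1
    refine Finset.sum_congr rfl fun a _ => Finset.sum_congr rfl fun b _ => ?_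
    dsimp only
    rw [← Finset.sum_mul]
    rfl
  have hBC : ent (margBC P) = -∑ x : α × β × γ, P x * Real.log (margBC P (x.2.1, x.2.2)) := by
    rw [ent, trip_sum_b (fun x => P x * Real.log (margBC P (x.2.1, x.2.2))), Fintype.sum_prod_type]
    congr 1
    refine Finset.sum_congr rfl fun b _ => ?_
    rw [Finset.sum_comm]
    refine Finset.sum_congr rfl fun c _ => ?_
    dsimp only
    rw [← Finset.sum_mul]
    rfl
  have hB : ent (margB P) = -∑ x : α × β × γ, P x * Real.log (margB P x.2.1) := by
    rw [ent, trip_sum_b (fun x => P x * Real.log (margB P x.2.1))]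
    congr 1
    refine Finset.sum_congr rfl fun b _ => ?_
    dsimp only
    calc margB P b * Real.log (margB P b)
        = (∑ a, ∑ c, P (a, b, c)) * Real.log (margB P b) := rfl
      _ = ∑ a, (∑ c, P (a, b, c)) * Real.log (margB P b) := Finset.sum_mul _ _ _
      _ = ∑ a, ∑ c, P (a, b, c) * Real.log (margB P b) :=
          Finset.sum_congr rfl fun a _ => Finset.sum_mul _ _ _
  have hP : ent P = -∑ x : α × β × γ, P x * Real.log (P x) := rfl
  rw [hAB, hBC, hB, hP]
  simp only [mul_add, mul_sub, Finset.sum_add_distrib, Finset.sum_sub_distrib]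
  ring

end cmi

section fwd
variable {α β γ : Type*} [Fintype α] [Fintype β] [Fintype γ]

lemma margAB_nonneg {P : α × β × γ → ℝ} (h0 : ∀ x, 0 ≤ P x) (y : α × β) : 0 ≤ margAB P y :=
  Finset.sum_nonneg fun _ _ => h0 _
lemma margBC_nonneg {P : α × β × γ → ℝ} (h0 : ∀ x, 0 ≤ P x) (y : β × γ) : 0 ≤ margBC P y :=
  Finset.sum_nonneg fun _ _ => h0 _
lemma margB_nonneg {P : α × β × γ → ℝ} (h0 : ∀ x, 0 ≤ P x) (b : β) : 0 ≤ margB P b :=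
  Finset.sum_nonneg fun _ _ => Finset.sum_nonneg fun _ _ => h0 _

lemma margAB_pos {P : α × β × γ → ℝ} (h0 : ∀ x, 0 ≤ P x) {a b c} (h : 0 < P (a, b, c)) :
    0 < margAB P (a, b) :=
  lt_of_lt_of_le h (Finset.single_le_sum (f := fun c' => P (a, b, c'))
    (fun _ _ => h0 _) (mem_univ c))
lemma margBC_pos {P : α × β × γ → ℝ} (h0 : ∀ x, 0 ≤ P x) {a b c} (h : 0 < P (a, b, c)) :
    0 < margBC P (b, c) :=
  lt_of_lt_of_le h (Finset.single_le_sum (f := fun a' => P (a', b, c))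
    (fun _ _ => h0 _) (mem_univ a))
lemma margAB_le_margB {P : α × β × γ → ℝ} (h0 : ∀ x, 0 ≤ P x) (a : α) (b : β) :
    margAB P (a, b) ≤ margB P b :=
  Finset.single_le_sum (f := fun a' => ∑ c, P (a', b, c))
    (fun _ _ => Finset.sum_nonneg fun _ _ => h0 _) (mem_univ a)
lemma margB_pos {P : α × β × γ → ℝ} (h0 : ∀ x, 0 ≤ P x) {a b c} (h : 0 < P (a, b, c)) :
    0 < margB P b :=
  lt_of_lt_of_le (margAB_pos h0 h) (margAB_le_margB h0 a b)

lemma cmi_forward (P : α × β × γ → ℝ) (h0 : ∀ x, 0 ≤ P x)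
    (hfac : ∀ a b c, P (a, b, c) * margB P b = margAB P (a, b) * margBC P (b, c)) :
    ent (margAB P) + ent (margBC P) - ent P - ent (margB P) = 0 := by
  rw [cmi_eq_sum]
  apply Finset.sum_eq_zero
  rintro ⟨a, b, c⟩ -
  dsimp only
  by_cases hP : P (a, b, c) = 0
  · rw [hP, zero_mul]
  · have hPpos : 0 < P (a, b, c) := lt_of_le_of_ne (h0 _) (Ne.symm hP)
    have hAB := margAB_pos h0 hPpos
    have hBC := margBC_pos h0 hPpos
    have hB := margB_pos h0 hPpos
    have hlog : Real.log (P (a, b, c)) + Real.log (margB P b)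
        = Real.log (margAB P (a, b)) + Real.log (margBC P (b, c)) := by
      rw [← Real.log_mul (ne_of_gt hPpos) (ne_of_gt hB),
        ← Real.log_mul (ne_of_gt hAB) (ne_of_gt hBC), hfac]
    have : Real.log (P (a, b, c)) + Real.log (margB P b)
        - Real.log (margAB P (a, b)) - Real.log (margBC P (b, c)) = 0 := by linarith
    rw [this, mul_zero]

lemma cmi_converse (P : α × β × γ → ℝ) (h0 : ∀ x, 0 ≤ P x) (h1 : ∑ x, P x = 1)
    (hz : ent (margAB P) + ent (margBC P) - ent P - ent (margB P) = 0) :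
    ∀ a b c, P (a, b, c) * margB P b = margAB P (a, b) * margBC P (b, c) := by
  classical
  set Q : α × β × γ → ℝ := fun x =>
    if 0 < margB P x.2.1 then margAB P (x.1, x.2.1) * margBC P (x.2.1, x.2.2) / margB P x.2.1
    else 0 with hQdef
  have hQn : ∀ x, 0 ≤ Q x := by
    intro x
    rw [hQdef]
    dsimp only
    split
    · exact div_nonneg (mul_nonneg (margAB_nonneg h0 _) (margBC_nonneg h0 _)) (le_of_lt ‹_›)
    · exact le_refl 0
  have hsumQ : ∑ x, Q x = 1 := by
    rw [trip_sum_b Q]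
    have hb : ∀ b : β, ∑ a, ∑ c, Q (a, b, c) = margB P b := by
      intro b
      by_cases hbp : 0 < margB P b
      · have : ∀ a : α, ∑ c, Q (a, b, c)
            = margAB P (a, b) * (∑ c, margBC P (b, c)) / margB P b := by
          intro a
          rw [Finset.mul_sum, Finset.sum_div]
          refine Finset.sum_congr rfl fun c _ => ?_
          rw [hQdef]; dsimp only; rw [if_pos hbp]
        rw [Finset.sum_congr rfl fun a _ => this a]
        have hC : ∑ c, margBC P (b, c) = margB P b := by
          rw [margB]; exact Finset.sum_comm
        have hA : ∑ a, margAB P (a, b) = margB P b := rfl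
        rw [hC, ← Finset.sum_div, ← Finset.sum_mul, hA, mul_div_assoc,
          div_self (ne_of_gt hbp), mul_one]
      · have hb0 : margB P b = 0 := le_antisymm (not_lt.mp hbp) (margB_nonneg h0 b)
        have : ∀ a : α, ∑ c, Q (a, b, c) = 0 := by
          intro a
          apply Finset.sum_eq_zero
          intro c _
          rw [hQdef]; dsimp only; rw [if_neg hbp]
        rw [Finset.sum_congr rfl fun a _ => this a, hb0, Finset.sum_const, smul_zero]
    rw [Finset.sum_congr rfl fun b _ => hb b]
    rw [← h1, trip_sum_b P]
    rfl
  -- termwise equality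
  set T : α × β × γ → ℝ := fun x =>
    P x * (Real.log (P x) + Real.log (margB P x.2.1)
      - Real.log (margAB P (x.1, x.2.1)) - Real.log (margBC P (x.2.1, x.2.2)))
      - (P x - Q x) with hTdef
  have hTsum : ∑ x, T x = 0 := by
    rw [hTdef]
    rw [Finset.sum_sub_distrib, Finset.sum_sub_distrib, ← cmi_eq_sum, hz, h1, hsumQ]
    ring
  have hTnn : ∀ x : α × β × γ, 0 ≤ T x := by
    rintro ⟨a, b, c⟩
    rw [hTdef]
    dsimp only
    by_cases hP : P (a, b, c) = 0
    · rw [hP]; simpa using hQn (a, b, c)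
    · have hPpos : 0 < P (a, b, c) := lt_of_le_of_ne (h0 _) (Ne.symm hP)
      have hAB := margAB_pos h0 hPpos
      have hBC := margBC_pos h0 hPpos
      have hB := margB_pos h0 hPpos
      have hQx : Q (a, b, c) = margAB P (a, b) * margBC P (b, c) / margB P b := by
        rw [hQdef]; dsimp only; rw [if_pos hB]
      have hQp : 0 < Q (a, b, c) := by rw [hQx]; positivity
      have hlog : Real.log (Q (a, b, c) / P (a, b, c))
          = Real.log (margAB P (a, b)) + Real.log (margBC P (b, c))
            - Real.log (margB P b) - Real.log (P (a, b, c)) := by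
        rw [Real.log_div (ne_of_gt hQp) (ne_of_gt hPpos), hQx,
          Real.log_div (by positivity) (ne_of_gt hB),
          Real.log_mul (ne_of_gt hAB) (ne_of_gt hBC)]
      have hle : Real.log (Q (a, b, c) / P (a, b, c)) ≤ Q (a, b, c) / P (a, b, c) - 1 :=
        Real.log_le_sub_one_of_pos (by positivity)
      have hmul := mul_le_mul_of_nonneg_left hle hPpos.le
      have heq : P (a, b, c) * (Q (a, b, c) / P (a, b, c) - 1)
          = Q (a, b, c) - P (a, b, c) := by field_simp
      nlinarith [hmul, heq, hlog]
  have hT0 : ∀ x : α × β × γ, T x = 0 := fun x =>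
    (Finset.sum_eq_zero_iff_of_nonneg (fun x _ => hTnn x)).mp hTsum x (mem_univ x)
  intro a b c
  have hx := hT0 (a, b, c)
  rw [hTdef] at hx
  dsimp only at hx
  by_cases hP : P (a, b, c) = 0
  · have hQ0 : Q (a, b, c) = 0 := by rw [hP] at hx; linarith [hx]
    by_cases hbp : 0 < margB P b
    · have : margAB P (a, b) * margBC P (b, c) / margB P b = 0 := by
        rw [hQdef] at hQ0; dsimp only at hQ0; rwa [if_pos hbp] at hQ0
      have h2 : margAB P (a, b) * margBC P (b, c) = 0 := by
        field_simp at this; rwa [mul_zero] at this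
      rw [hP, zero_mul, h2]
    · have hb0 : margB P b = 0 := le_antisymm (not_lt.mp hbp) (margB_nonneg h0 b)
      have hAB0 : margAB P (a, b) = 0 :=
        le_antisymm (hb0 ▸ margAB_le_margB h0 a b) (margAB_nonneg h0 _)
      rw [hP, hb0, hAB0, mul_zero, zero_mul]
  · have hPpos : 0 < P (a, b, c) := lt_of_le_of_ne (h0 _) (Ne.symm hP)
    have hAB := margAB_pos h0 hPpos
    have hBC := margBC_pos h0 hPpos
    have hB := margB_pos h0 hPpos
    have hQx : Q (a, b, c) = margAB P (a, b) * margBC P (b, c) / margB P b := by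
      rw [hQdef]; dsimp only; rw [if_pos hB]
    have hQp : 0 < Q (a, b, c) := by rw [hQx]; positivity
    have hlog : Real.log (Q (a, b, c) / P (a, b, c))
        = Real.log (margAB P (a, b)) + Real.log (margBC P (b, c))
          - Real.log (margB P b) - Real.log (P (a, b, c)) := by
      rw [Real.log_div (ne_of_gt hQp) (ne_of_gt hPpos), hQx,
        Real.log_div (by positivity) (ne_of_gt hB),
        Real.log_mul (ne_of_gt hAB) (ne_of_gt hBC)]
    -- hx : P * (logP + logB - logAB - logBC) - (P - Q) = 0
    have hPQ : P (a, b, c) * Real.log (Q (a, b, c) / P (a, b, c))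
        = Q (a, b, c) - P (a, b, c) := by
      rw [hlog]; linear_combination -hx
    have hratio : Real.log (Q (a, b, c) / P (a, b, c))
        = Q (a, b, c) / P (a, b, c) - 1 := by
      rw [show Q (a, b, c) / P (a, b, c) - 1
          = (Q (a, b, c) - P (a, b, c)) / P (a, b, c) by field_simp, ← hPQ,
        mul_div_cancel_left₀ _ (ne_of_gt hPpos)]
    have hone : Q (a, b, c) / P (a, b, c) = 1 := by
      by_contra hne
      exact absurd hratio (ne_of_lt (Real.log_lt_sub_one_of_pos (by positivity) hne))
    have hQP : Q (a, b, c) = P (a, b, c) := by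
      rw [div_eq_one_iff_eq (ne_of_gt hPpos)] at hone
      exact hone
    rw [hQx, div_eq_iff (ne_of_gt hB)] at hQP
    linarith [hQP]

end fwd
section prodfac
variable {α β γ : Type*} [Fintype α] [Fintype β] [Fintype γ]

lemma fac_of_prod (P : α × β × γ → ℝ) (Φ : α × β → ℝ) (Ψ : β × γ → ℝ)
    (h : ∀ a b c, P (a, b, c) = Φ (a, b) * Ψ (b, c)) :
    ∀ a b c, P (a, b, c) * margB P b = margAB P (a, b) * margBC P (b, c) := by
  intro a b c
  have hAB : margAB P (a, b) = Φ (a, b) * ∑ c', Ψ (b, c') := by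
    rw [margAB, Finset.mul_sum]
    exact Finset.sum_congr rfl fun c' _ => h a b c'
  have hBC : margBC P (b, c) = (∑ a', Φ (a', b)) * Ψ (b, c) := by
    rw [margBC, Finset.sum_mul]
    exact Finset.sum_congr rfl fun a' _ => h a' b c
  have hB : margB P b = (∑ a', Φ (a', b)) * ∑ c', Ψ (b, c') := by
    rw [margB, Finset.sum_mul_sum]
    exact Finset.sum_congr rfl fun a' _ => Finset.sum_congr rfl fun c' _ => h a' b c'
  rw [h a b c, hAB, hBC, hB]
  ring

end prodfac

section comm
variable {Ω 𝒜 𝒞 𝒳₁ 𝒳₂ : Type*} {n r : ℕ}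
    [Fintype Ω] [Fintype 𝒜] [Fintype 𝒞] [Fintype 𝒳₁] [Fintype 𝒳₂]
    [DecidableEq 𝒜] [DecidableEq 𝒞] [DecidableEq 𝒳₁] [DecidableEq 𝒳₂]
    (μ : Ω → ℝ) (G : Ω → 𝒜) (C : Fin r → Ω → 𝒞)
    (X1 : Ω → Fin n → 𝒳₁) (X2 : Ω → Fin n → 𝒳₂)

lemma step_even (hμ : IsPMF μ) (k : ℕ) (hk : k < r)
    (hcmi : condMI μ (C ⟨k, hk⟩)
      (fun ω => (G ω, (fun j : Fin k => C (Fin.castLE hk.le j) ω), X1 ω)) X2 = 0) :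
    ∃ K : 𝒞 → 𝒜 → (Fin k → 𝒞) → (Fin n → 𝒳₁) → ℝ,
      (∀ a g cc x1, 0 ≤ K a g cc x1) ∧
      ∀ (a : 𝒞) (g : 𝒜) (cc : Fin k → 𝒞) (x1 : Fin n → 𝒳₁) (x2 : Fin n → 𝒳₂),
        pushf μ (fun ω => (G ω, (fun j : Fin (k+1) => C (Fin.castLE hk j) ω), X1 ω, X2 ω))
            (g, Fin.snoc cc a, x1, x2)
          = K a g cc x1 *
            pushf μ (fun ω => (G ω, (fun j : Fin k => C (Fin.castLE hk.le j) ω), X1 ω, X2 ω))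
              (g, cc, x1, x2) := by
  set A : Ω → 𝒞 := C ⟨k, hk⟩ with hA
  set B : Ω → 𝒜 × (Fin k → 𝒞) × (Fin n → 𝒳₁) :=
    fun ω => (G ω, (fun j : Fin k => C (Fin.castLE hk.le j) ω), X1 ω) with hB
  set P := pushf μ (fun ω => (A ω, B ω, X2 ω)) with hPdef
  set Zk1 : Ω → 𝒜 × (Fin (k+1) → 𝒞) × (Fin n → 𝒳₁) × (Fin n → 𝒳₂) :=
    fun ω => (G ω, (fun j : Fin (k+1) => C (Fin.castLE hk j) ω), X1 ω, X2 ω) with hZk1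
  set Zk : Ω → 𝒜 × (Fin k → 𝒞) × (Fin n → 𝒳₁) × (Fin n → 𝒳₂) :=
    fun ω => (G ω, (fun j : Fin k => C (Fin.castLE hk.le j) ω), X1 ω, X2 ω) with hZk
  have hPnn : ∀ x, 0 ≤ P x := fun x => pushf_nonneg μ _ hμ.1 x
  have hPsum : ∑ x, P x = 1 := by rw [hPdef, pushf_sum]; exact hμ.2
  have hz : ent (margAB P) + ent (margBC P) - ent P - ent (margB P) = 0 := by
    rw [hPdef]
    exact (condMI_repr μ A B X2).symm.trans hcmi
  have hfac := cmi_converse P hPnn hPsum hz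
  -- identification of P with pushforward of Zk1 under a bijective repackaging
  set e : (𝒜 × (Fin (k+1) → 𝒞) × (Fin n → 𝒳₁) × (Fin n → 𝒳₂)) →
      (𝒞 × (𝒜 × (Fin k → 𝒞) × (Fin n → 𝒳₁)) × (Fin n → 𝒳₂)) :=
    fun z => (z.2.1 (Fin.last k), (z.1, fun j => z.2.1 j.castSucc, z.2.2.1), z.2.2.2) with he
  have he_inj : Function.Injective e := by
    rintro ⟨g, c, x1, x2⟩ ⟨g', c', x1', x2'⟩ h
    simp only [he, Prod.mk.injEq] at h
    obtain ⟨h1, ⟨h2, h3, h4⟩, h5⟩ := h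
    refine Prod.ext h2 (Prod.ext ?_ (Prod.ext h4 h5))
    funext j
    refine Fin.lastCases ?_ (fun j => ?_) j
    · exact h1
    · exact congrFun h3 j
  have hcomp : (fun ω => (A ω, B ω, X2 ω)) = fun ω => e (Zk1 ω) := rfl
  have hP_eq : ∀ (a : 𝒞) (g : 𝒜) (cc : Fin k → 𝒞) x1 x2,
      P (a, (g, cc, x1), x2) = pushf μ Zk1 (g, Fin.snoc cc a, x1, x2) := by
    intro a g cc x1 x2
    have hev : e (g, Fin.snoc cc a, x1, x2) = (a, (g, cc, x1), x2) := by
      simp only [he, Fin.snoc_last, Fin.snoc_castSucc]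
    have := pushf_inj μ Zk1 e he_inj (g, Fin.snoc cc a, x1, x2)
    rw [hev] at this
    rw [hPdef, hcomp, this]
  -- margBC P = Zk pushforward
  set e2 : (𝒜 × (Fin k → 𝒞) × (Fin n → 𝒳₁) × (Fin n → 𝒳₂)) →
      ((𝒜 × (Fin k → 𝒞) × (Fin n → 𝒳₁)) × (Fin n → 𝒳₂)) :=
    fun z => ((z.1, z.2.1, z.2.2.1), z.2.2.2) with he2
  have he2_inj : Function.Injective e2 := by
    rintro ⟨g, c, x1, x2⟩ ⟨g', c', x1', x2'⟩ h
    simp only [he2, Prod.mk.injEq] at h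
    obtain ⟨⟨h1, h2, h3⟩, h4⟩ := h
    exact Prod.ext h1 (Prod.ext h2 (Prod.ext h3 h4))
  have hBC_eq : ∀ (g : 𝒜) (cc : Fin k → 𝒞) x1 x2,
      margBC P ((g, cc, x1), x2) = pushf μ Zk (g, cc, x1, x2) := by
    intro g cc x1 x2
    have hcomp2 : (fun ω => (B ω, X2 ω)) = fun ω => e2 (Zk ω) := rfl
    have := pushf_inj μ Zk e2 he2_inj (g, cc, x1, x2)
    rw [show e2 (g, cc, x1, x2) = ((g, cc, x1), x2) from rfl] at this
    rw [hPdef, ← pushf_BC μ A B X2, hcomp2, this]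
  have hB_eq : ∀ (g : 𝒜) (cc : Fin k → 𝒞) x1,
      margB P (g, cc, x1) = pushf μ B (g, cc, x1) := by
    intro g cc x1
    rw [hPdef, ← pushf_B μ A B X2]
  -- the kernel
  refine ⟨fun a g cc x1 => if pushf μ B (g, cc, x1) = 0 then 0
    else margAB P (a, (g, cc, x1)) / pushf μ B (g, cc, x1), ?_, ?_⟩
  · intro a g cc x1
    dsimp only
    split
    · exact le_refl 0
    · exact div_nonneg (margAB_nonneg hPnn _) (pushf_nonneg μ _ hμ.1 _)
  · intro a g cc x1 x2
    dsimp only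
    by_cases hPB : pushf μ B (g, cc, x1) = 0
    · rw [if_pos hPB, zero_mul]
      -- Zk1 value is dominated by the B-marginal
      set f3 : (𝒜 × (Fin (k+1) → 𝒞) × (Fin n → 𝒳₁) × (Fin n → 𝒳₂)) →
          (𝒜 × (Fin k → 𝒞) × (Fin n → 𝒳₁)) :=
        fun z => (z.1, fun j => z.2.1 j.castSucc, z.2.2.1) with hf3
    -- B = f3 ∘ Zk1
      have hcomp3 : B = fun ω => f3 (Zk1 ω) := rfl
      have hle := pushf_comp_le μ Zk1 hμ.1 f3 (g, Fin.snoc cc a, x1, x2)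
      have hval : f3 (g, Fin.snoc cc a, x1, x2) = (g, cc, x1) := by
        simp only [hf3, Fin.snoc_castSucc]
      rw [hval, ← congrFun (congrArg (pushf μ) hcomp3) (g, cc, x1)] at hle
      have := pushf_nonneg μ Zk1 hμ.1 (g, Fin.snoc cc a, x1, x2)
      have : pushf μ Zk1 (g, Fin.snoc cc a, x1, x2) = 0 := le_antisymm (hPB ▸ hle) this
      exact this
    · rw [if_neg hPB]
      have h := hfac a (g, cc, x1) x2
      rw [hP_eq, hBC_eq, hB_eq] at h
      field_simp
      linear_combination h

lemma step_odd (hμ : IsPMF μ) (k : ℕ) (hk : k < r)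
    (hcmi : condMI μ (C ⟨k, hk⟩)
      (fun ω => (G ω, (fun j : Fin k => C (Fin.castLE hk.le j) ω), X2 ω)) X1 = 0) :
    ∃ K : 𝒞 → 𝒜 → (Fin k → 𝒞) → (Fin n → 𝒳₂) → ℝ,
      (∀ a g cc x2, 0 ≤ K a g cc x2) ∧
      ∀ (a : 𝒞) (g : 𝒜) (cc : Fin k → 𝒞) (x1 : Fin n → 𝒳₁) (x2 : Fin n → 𝒳₂),
        pushf μ (fun ω => (G ω, (fun j : Fin (k+1) => C (Fin.castLE hk j) ω), X1 ω, X2 ω))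
            (g, Fin.snoc cc a, x1, x2)
          = K a g cc x2 *
            pushf μ (fun ω => (G ω, (fun j : Fin k => C (Fin.castLE hk.le j) ω), X1 ω, X2 ω))
              (g, cc, x1, x2) := by
  set A : Ω → 𝒞 := C ⟨k, hk⟩ with hA
  set B : Ω → 𝒜 × (Fin k → 𝒞) × (Fin n → 𝒳₂) :=
    fun ω => (G ω, (fun j : Fin k => C (Fin.castLE hk.le j) ω), X2 ω) with hB
  set P := pushf μ (fun ω => (A ω, B ω, X1 ω)) with hPdef
  set Zk1 : Ω → 𝒜 × (Fin (k+1) → 𝒞) × (Fin n → 𝒳₁) × (Fin n → 𝒳₂) :=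
    fun ω => (G ω, (fun j : Fin (k+1) => C (Fin.castLE hk j) ω), X1 ω, X2 ω) with hZk1
  set Zk : Ω → 𝒜 × (Fin k → 𝒞) × (Fin n → 𝒳₁) × (Fin n → 𝒳₂) :=
    fun ω => (G ω, (fun j : Fin k => C (Fin.castLE hk.le j) ω), X1 ω, X2 ω) with hZk
  have hPnn : ∀ x, 0 ≤ P x := fun x => pushf_nonneg μ _ hμ.1 x
  have hPsum : ∑ x, P x = 1 := by rw [hPdef, pushf_sum]; exact hμ.2
  have hz : ent (margAB P) + ent (margBC P) - ent P - ent (margB P) = 0 := by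
    rw [hPdef]
    exact (condMI_repr μ A B X1).symm.trans hcmi
  have hfac := cmi_converse P hPnn hPsum hz
  set e : (𝒜 × (Fin (k+1) → 𝒞) × (Fin n → 𝒳₁) × (Fin n → 𝒳₂)) →
      (𝒞 × (𝒜 × (Fin k → 𝒞) × (Fin n → 𝒳₂)) × (Fin n → 𝒳₁)) :=
    fun z => (z.2.1 (Fin.last k), (z.1, fun j => z.2.1 j.castSucc, z.2.2.2), z.2.2.1) with he
  have he_inj : Function.Injective e := by
    rintro ⟨g, c, x1, x2⟩ ⟨g', c', x1', x2'⟩ h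
    simp only [he, Prod.mk.injEq] at h
    obtain ⟨h1, ⟨h2, h3, h4⟩, h5⟩ := h
    refine Prod.ext h2 (Prod.ext ?_ (Prod.ext h5 h4))
    funext j
    refine Fin.lastCases ?_ (fun j => ?_) j
    · exact h1
    · exact congrFun h3 j
  have hcomp : (fun ω => (A ω, B ω, X1 ω)) = fun ω => e (Zk1 ω) := rfl
  have hP_eq : ∀ (a : 𝒞) (g : 𝒜) (cc : Fin k → 𝒞) x1 x2,
      P (a, (g, cc, x2), x1) = pushf μ Zk1 (g, Fin.snoc cc a, x1, x2) := by
    intro a g cc x1 x2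
    have hev : e (g, Fin.snoc cc a, x1, x2) = (a, (g, cc, x2), x1) := by
      simp only [he, Fin.snoc_last, Fin.snoc_castSucc]
    have := pushf_inj μ Zk1 e he_inj (g, Fin.snoc cc a, x1, x2)
    rw [hev] at this
    rw [hPdef, hcomp, this]
  set e2 : (𝒜 × (Fin k → 𝒞) × (Fin n → 𝒳₁) × (Fin n → 𝒳₂)) →
      ((𝒜 × (Fin k → 𝒞) × (Fin n → 𝒳₂)) × (Fin n → 𝒳₁)) :=
    fun z => ((z.1, z.2.1, z.2.2.2), z.2.2.1) with he2
  have he2_inj : Function.Injective e2 := by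
    rintro ⟨g, c, x1, x2⟩ ⟨g', c', x1', x2'⟩ h
    simp only [he2, Prod.mk.injEq] at h
    obtain ⟨⟨h1, h2, h3⟩, h4⟩ := h
    exact Prod.ext h1 (Prod.ext h2 (Prod.ext h4 h3))
  have hBC_eq : ∀ (g : 𝒜) (cc : Fin k → 𝒞) x1 x2,
      margBC P ((g, cc, x2), x1) = pushf μ Zk (g, cc, x1, x2) := by
    intro g cc x1 x2
    have hcomp2 : (fun ω => (B ω, X1 ω)) = fun ω => e2 (Zk ω) := rfl
    have := pushf_inj μ Zk e2 he2_inj (g, cc, x1, x2)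
    rw [show e2 (g, cc, x1, x2) = ((g, cc, x2), x1) from rfl] at this
    rw [hPdef, ← pushf_BC μ A B X1, hcomp2, this]
  have hB_eq : ∀ (g : 𝒜) (cc : Fin k → 𝒞) x2,
      margB P (g, cc, x2) = pushf μ B (g, cc, x2) := by
    intro g cc x2
    rw [hPdef, ← pushf_B μ A B X1]
  refine ⟨fun a g cc x2 => if pushf μ B (g, cc, x2) = 0 then 0
    else margAB P (a, (g, cc, x2)) / pushf μ B (g, cc, x2), ?_, ?_⟩
  · intro a g cc x2
    dsimp only
    split
    · exact le_refl 0
    · exact div_nonneg (margAB_nonneg hPnn _) (pushf_nonneg μ _ hμ.1 _)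
  · intro a g cc x1 x2
    dsimp only
    by_cases hPB : pushf μ B (g, cc, x2) = 0
    · rw [if_pos hPB, zero_mul]
      set f3 : (𝒜 × (Fin (k+1) → 𝒞) × (Fin n → 𝒳₁) × (Fin n → 𝒳₂)) →
          (𝒜 × (Fin k → 𝒞) × (Fin n → 𝒳₂)) :=
        fun z => (z.1, fun j => z.2.1 j.castSucc, z.2.2.2) with hf3
      have hcomp3 : B = fun ω => f3 (Zk1 ω) := rfl
      have hle := pushf_comp_le μ Zk1 hμ.1 f3 (g, Fin.snoc cc a, x1, x2)
      have hval : f3 (g, Fin.snoc cc a, x1, x2) = (g, cc, x2) := by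
        simp only [hf3, Fin.snoc_castSucc]
      rw [hval, ← congrFun (congrArg (pushf μ) hcomp3) (g, cc, x2)] at hle
      have hnn := pushf_nonneg μ Zk1 hμ.1 (g, Fin.snoc cc a, x1, x2)
      exact le_antisymm (hPB ▸ hle) hnn
    · rw [if_neg hPB]
      have h := hfac a (g, cc, x2) x1
      rw [hP_eq, hBC_eq, hB_eq] at h
      field_simp
      linear_combination h
lemma INV (hμ : IsPMF μ) (p : 𝒳₁ × 𝒳₂ → ℝ)
    (hiid : pushf μ (fun ω => (G ω, fun q => (X1 ω q, X2 ω q)))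
      = fun z => pushf μ G z.1 * ∏ q, p (z.2 q))
    (hodd : ∀ i : Fin r, Even i.val →
      condMI μ (C i)
        (fun ω => (G ω, (fun j : Fin i.val => C (Fin.castLE i.isLt.le j) ω), X1 ω))
        X2 = 0)
    (heven : ∀ i : Fin r, Odd i.val →
      condMI μ (C i)
        (fun ω => (G ω, (fun j : Fin i.val => C (Fin.castLE i.isLt.le j) ω), X2 ω))
        X1 = 0) :
    ∀ (k : ℕ) (hk : k ≤ r),
      ∃ φ : 𝒜 → (Fin k → 𝒞) → (Fin n → 𝒳₁) → ℝ,
      ∃ ψ : 𝒜 → (Fin k → 𝒞) → (Fin n → 𝒳₂) → ℝ,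
        (∀ g c x1, 0 ≤ φ g c x1) ∧ (∀ g c x2, 0 ≤ ψ g c x2) ∧
        ∀ g c x1 x2,
          pushf μ (fun ω => (G ω, (fun j : Fin k => C (Fin.castLE hk j) ω), X1 ω, X2 ω))
              (g, c, x1, x2)
            = φ g c x1 * ψ g c x2 * ∏ q, p (x1 q, x2 q) := by
  intro k
  induction k with
  | zero =>
    intro hk
    refine ⟨fun g _ _ => pushf μ G g, fun _ _ _ => 1,
      fun g _ _ => pushf_nonneg μ G hμ.1 g, fun _ _ _ => zero_le_one, ?_⟩
    intro g c x1 x2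
    set W : Ω → 𝒜 × (Fin n → 𝒳₁ × 𝒳₂) := fun ω => (G ω, fun q => (X1 ω q, X2 ω q)) with hW
    set e0 : (𝒜 × (Fin n → 𝒳₁ × 𝒳₂)) → (𝒜 × (Fin 0 → 𝒞) × (Fin n → 𝒳₁) × (Fin n → 𝒳₂)) :=
      fun z => (z.1, (fun j => j.elim0), fun q => (z.2 q).1, fun q => (z.2 q).2) with he0
    have he0_inj : Function.Injective e0 := by
      rintro ⟨g, w⟩ ⟨g', w'⟩ h
      simp only [he0, Prod.mk.injEq] at h
      obtain ⟨h1, _, h3, h4⟩ := h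
      refine Prod.ext h1 (funext fun q => ?_)
      exact Prod.ext (congrFun h3 q) (congrFun h4 q)
    have hcomp : (fun ω => (G ω, (fun j : Fin 0 => C (Fin.castLE hk j) ω), X1 ω, X2 ω))
        = fun ω => e0 (W ω) := by
      funext ω
      refine Prod.ext rfl (Prod.ext (funext fun j => j.elim0) rfl)
    have hpt : (g, c, x1, x2) = e0 (g, fun q => (x1 q, x2 q)) := by
      refine Prod.ext rfl (Prod.ext (funext fun j => j.elim0) rfl)
    rw [hcomp, hpt, pushf_inj μ W e0 he0_inj, hW, hiid]
    simp
  | succ k ih =>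
    intro hk
    have hklt : k < r := hk
    obtain ⟨φ, ψ, hφnn, hψnn, hfac⟩ := ih hklt.le
    by_cases hkeven : Even k
    · obtain ⟨K, hKnn, hKeq⟩ := step_even μ G C X1 X2 hμ k hklt (hodd ⟨k, hklt⟩ hkeven)
      refine ⟨fun g c x1 => K (c (Fin.last k)) g (Fin.init c) x1 * φ g (Fin.init c) x1,
        fun g c x2 => ψ g (Fin.init c) x2,
        fun g c x1 => mul_nonneg (hKnn _ _ _ _) (hφnn _ _ _),
        fun g c x2 => hψnn _ _ _, ?_⟩
      intro g c x1 x2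
      have hsnoc : Fin.snoc (Fin.init c) (c (Fin.last k)) = c := Fin.snoc_init_self c
      calc pushf μ (fun ω => (G ω, (fun j : Fin (k+1) => C (Fin.castLE hk j) ω), X1 ω, X2 ω))
            (g, c, x1, x2)
          = pushf μ (fun ω => (G ω, (fun j : Fin (k+1) => C (Fin.castLE hk j) ω), X1 ω, X2 ω))
            (g, Fin.snoc (Fin.init c) (c (Fin.last k)), x1, x2) := by rw [hsnoc]
        _ = K (c (Fin.last k)) g (Fin.init c) x1 *
            pushf μ (fun ω => (G ω, (fun j : Fin k => C (Fin.castLE hklt.le j) ω), X1 ω, X2 ω))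
              (g, Fin.init c, x1, x2) := hKeq (c (Fin.last k)) g (Fin.init c) x1 x2
        _ = K (c (Fin.last k)) g (Fin.init c) x1 *
            (φ g (Fin.init c) x1 * ψ g (Fin.init c) x2 * ∏ q, p (x1 q, x2 q)) := by
              rw [hfac g (Fin.init c) x1 x2]
        _ = (K (c (Fin.last k)) g (Fin.init c) x1 * φ g (Fin.init c) x1) *
            ψ g (Fin.init c) x2 * ∏ q, p (x1 q, x2 q) := by ring
    · have hkodd : Odd k := (Nat.even_or_odd k).resolve_left hkeven
      obtain ⟨K, hKnn, hKeq⟩ := step_odd μ G C X1 X2 hμ k hklt (heven ⟨k, hklt⟩ hkodd)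
      refine ⟨fun g c x1 => φ g (Fin.init c) x1,
        fun g c x2 => K (c (Fin.last k)) g (Fin.init c) x2 * ψ g (Fin.init c) x2,
        fun g c x1 => hφnn _ _ _,
        fun g c x2 => mul_nonneg (hKnn _ _ _ _) (hψnn _ _ _), ?_⟩
      intro g c x1 x2
      have hsnoc : Fin.snoc (Fin.init c) (c (Fin.last k)) = c := Fin.snoc_init_self c
      calc pushf μ (fun ω => (G ω, (fun j : Fin (k+1) => C (Fin.castLE hk j) ω), X1 ω, X2 ω))
            (g, c, x1, x2)
          = pushf μ (fun ω => (G ω, (fun j : Fin (k+1) => C (Fin.castLE hk j) ω), X1 ω, X2 ω))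
            (g, Fin.snoc (Fin.init c) (c (Fin.last k)), x1, x2) := by rw [hsnoc]
        _ = K (c (Fin.last k)) g (Fin.init c) x2 *
            pushf μ (fun ω => (G ω, (fun j : Fin k => C (Fin.castLE hklt.le j) ω), X1 ω, X2 ω))
              (g, Fin.init c, x1, x2) := hKeq (c (Fin.last k)) g (Fin.init c) x1 x2
        _ = K (c (Fin.last k)) g (Fin.init c) x2 *
            (φ g (Fin.init c) x1 * ψ g (Fin.init c) x2 * ∏ q, p (x1 q, x2 q)) := by
              rw [hfac g (Fin.init c) x1 x2]
        _ = φ g (Fin.init c) x1 *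
            (K (c (Fin.last k)) g (Fin.init c) x2 * ψ g (Fin.init c) x2) * ∏ q, p (x1 q, x2 q) := by
              ring

end comm

section glue
variable {n : ℕ} {𝒳 : Type*} (q : Fin n)

noncomputable def glue1 (y1 : {j : Fin n // q ≤ j} → 𝒳) (u : {j : Fin n // j < q} → 𝒳) :
    Fin n → 𝒳 := fun j => if h : q ≤ j then y1 ⟨j, h⟩ else u ⟨j, not_le.mp h⟩

noncomputable def glue2 (y2 : {j : Fin n // j < q} → 𝒳) (c : 𝒳)
    (v : {j : Fin n // q < j} → 𝒳) : Fin n → 𝒳 :=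
  fun j => if h : j < q then y2 ⟨j, h⟩ else if h2 : q < j then v ⟨j, h2⟩ else c

lemma glue1_ge (y1 : {j : Fin n // q ≤ j} → 𝒳) (u) {j : Fin n} (h : q ≤ j) :
    glue1 q y1 u j = y1 ⟨j, h⟩ := dif_pos h

lemma glue1_lt (y1 : {j : Fin n // q ≤ j} → 𝒳) (u) {j : Fin n} (h : j < q) :
    glue1 q y1 u j = u ⟨j, h⟩ := dif_neg (not_le.mpr h)

lemma glue2_lt (y2 : {j : Fin n // j < q} → 𝒳) (c) (v) {j : Fin n} (h : j < q) :
    glue2 q y2 c v j = y2 ⟨j, h⟩ := dif_pos h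

lemma glue2_gt (y2 : {j : Fin n // j < q} → 𝒳) (c) (v) {j : Fin n} (h : q < j) :
    glue2 q y2 c v j = v ⟨j, h⟩ := by
  rw [glue2, dif_neg (not_lt.mpr h.le), dif_pos h]

lemma glue2_q (y2 : {j : Fin n // j < q} → 𝒳) (c) (v) :
    glue2 q y2 c v q = c := by
  rw [glue2, dif_neg (lt_irrefl q), dif_neg (lt_irrefl q)]

end glue

/-- under the interactive communication Markov structure (`G` independent
of the i.i.d. pair sequence `(X_1^n, X_2^n)`, `C_i — (G, C_{<i}, X_1^n) — X_2^n` for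
paper-odd rounds (0-indexed: `Even i.val`), `C_i — (G, C_{<i}, X_2^n) — X_1^n` for
paper-even rounds), for each `q` and each paper-odd `i`, the Markov chain
`C_i — (G, C_{<i}, X_1^{q:n}, X_2^{1:q-1}) — X_{2,q}` holds. -/
theorem markov_single_letter_odd {Ω 𝒜 𝒞 𝒳₁ 𝒳₂ : Type*} {n r : ℕ}
    [Fintype Ω] [Fintype 𝒜] [Fintype 𝒞] [Fintype 𝒳₁] [Fintype 𝒳₂]
    [DecidableEq 𝒜] [DecidableEq 𝒞] [DecidableEq 𝒳₁] [DecidableEq 𝒳₂]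
    (μ : Ω → ℝ) (hμ : IsPMF μ)
    (G : Ω → 𝒜) (C : Fin r → Ω → 𝒞)
    (X1 : Ω → Fin n → 𝒳₁) (X2 : Ω → Fin n → 𝒳₂)
    (p : 𝒳₁ × 𝒳₂ → ℝ) (hp : IsPMF p)
    (hiid : pushf μ (fun ω => (G ω, fun q => (X1 ω q, X2 ω q)))
      = fun z => pushf μ G z.1 * ∏ q, p (z.2 q))
    (hodd : ∀ i : Fin r, Even i.val →
      condMI μ (C i)
        (fun ω => (G ω, (fun j : Fin i.val => C (Fin.castLE i.isLt.le j) ω), X1 ω))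
        X2 = 0)
    (heven : ∀ i : Fin r, Odd i.val →
      condMI μ (C i)
        (fun ω => (G ω, (fun j : Fin i.val => C (Fin.castLE i.isLt.le j) ω), X2 ω))
        X1 = 0) :
    ∀ (q : Fin n) (i : Fin r), Even i.val →
      condMI μ (C i)
        (fun ω => ((G ω, (fun j : Fin i.val => C (Fin.castLE i.isLt.le j) ω)),
          ((fun j : {j : Fin n // q ≤ j} => X1 ω j.1),
           (fun j : {j : Fin n // j < q} => X2 ω j.1))))
        (fun ω => X2 ω q) = 0 := by
  intro q i hieven
  set k := i.val with hkdef
  have hklt : k < r := i.isLt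
  obtain ⟨φ, ψ, hφnn, hψnn, hfacINV⟩ := INV μ G C X1 X2 hμ p hiid hodd heven k hklt.le
  obtain ⟨K, hKnn, hKeq⟩ := step_even μ G C X1 X2 hμ k hklt (hodd i hieven)
  -- combined pointwise formula for the (k+1)-round joint
  have hF : ∀ (a : 𝒞) (g : 𝒜) (cc : Fin k → 𝒞) (x1 : Fin n → 𝒳₁) (x2 : Fin n → 𝒳₂),
      pushf μ (fun ω => (G ω, (fun j : Fin (k+1) => C (Fin.castLE hklt j) ω), X1 ω, X2 ω))
          (g, Fin.snoc cc a, x1, x2)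
        = (K a g cc x1 * φ g cc x1) * ψ g cc x2 * ∏ j, p (x1 j, x2 j) := by
    intro a g cc x1 x2
    rw [hKeq a g cc x1 x2, hfacINV g cc x1 x2]
    ring
  -- the target triple as a pushforward of the (k+1)-round joint
  set Zk1 : Ω → 𝒜 × (Fin (k+1) → 𝒞) × (Fin n → 𝒳₁) × (Fin n → 𝒳₂) :=
    fun ω => (G ω, (fun j : Fin (k+1) => C (Fin.castLE hklt j) ω), X1 ω, X2 ω) with hZk1
  set βT := (𝒜 × (Fin k → 𝒞)) × (({j : Fin n // q ≤ j} → 𝒳₁) × ({j : Fin n // j < q} → 𝒳₂))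
    with hβT
  set fT : (𝒜 × (Fin (k+1) → 𝒞) × (Fin n → 𝒳₁) × (Fin n → 𝒳₂)) → (𝒞 × βT × 𝒳₂) :=
    fun z => (z.2.1 (Fin.last k),
      ((z.1, fun j => z.2.1 j.castSucc),
        ((fun jj : {j : Fin n // q ≤ j} => z.2.2.1 jj.1),
         (fun jj : {j : Fin n // j < q} => z.2.2.2 jj.1))),
      z.2.2.2 q) with hfT
  have hcompT : (fun ω => ((C i) ω,
      ((G ω, (fun j : Fin k => C (Fin.castLE i.isLt.le j) ω)),
        ((fun j : {j : Fin n // q ≤ j} => X1 ω j.1),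
         (fun j : {j : Fin n // j < q} => X2 ω j.1))), X2 ω q))
      = fun ω => fT (Zk1 ω) := rfl
  set P : 𝒞 × βT × 𝒳₂ → ℝ := pushf μ (fun ω => fT (Zk1 ω)) with hP
  -- compute P as a sum over the fiber, parametrized by the free coordinates
  have hPsum : ∀ (a : 𝒞) (g : 𝒜) (cc : Fin k → 𝒞) (y1 : {j : Fin n // q ≤ j} → 𝒳₁)
      (y2 : {j : Fin n // j < q} → 𝒳₂) (c : 𝒳₂),
      P (a, ((g, cc), (y1, y2)), c)
        = ∑ w : ({j : Fin n // j < q} → 𝒳₁) × ({j : Fin n // q < j} → 𝒳₂),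
            pushf μ Zk1 (g, Fin.snoc cc a, glue1 q y1 w.1, glue2 q y2 c w.2) := by
    intro a g cc y1 y2 c
    rw [hP, pushf_comp μ Zk1 fT (a, ((g, cc), (y1, y2)), c)]
    have jeq : ∀ z ∈ univ.filter (fun z => fT z = (a, ((g, cc), (y1, y2)), c)),
        (g, Fin.snoc cc a,
          glue1 q y1 (fun jj : {j : Fin n // j < q} => z.2.2.1 jj.1),
          glue2 q y2 c (fun jj : {j : Fin n // q < j} => z.2.2.2 jj.1)) = z := by
      rintro ⟨g', c', x1, x2⟩ hz
      have hz' : fT (g', c', x1, x2) = (a, ((g, cc), (y1, y2)), c) := (mem_filter.mp hz).2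
      have h1 : c' (Fin.last k) = a := congrArg (fun t => t.1) hz'
      have h2 : g' = g := congrArg (fun t => t.2.1.1.1) hz'
      have h3 : (fun j : Fin k => c' j.castSucc) = cc := congrArg (fun t => t.2.1.1.2) hz'
      have h4 : (fun jj : {j : Fin n // q ≤ j} => x1 jj.1) = y1 :=
        congrArg (fun t => t.2.1.2.1) hz'
      have h5 : (fun jj : {j : Fin n // j < q} => x2 jj.1) = y2 :=
        congrArg (fun t => t.2.1.2.2) hz'
      have h6 : x2 q = c := congrArg (fun t => t.2.2) hz'
      refine Prod.ext h2.symm (Prod.ext ?_ (Prod.ext ?_ ?_)) <;> dsimp only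
      · funext j
        refine Fin.lastCases ?_ (fun j => ?_) j
        · rw [Fin.snoc_last]; exact h1.symm
        · rw [Fin.snoc_castSucc]; exact (congrFun h3 j).symm
      · funext j
        by_cases hj : q ≤ j
        · rw [glue1_ge q y1 _ hj]; exact (congrFun h4 ⟨j, hj⟩).symm
        · rw [glue1_lt q y1 _ (not_le.mp hj)]
      · funext j
        rcases lt_trichotomy j q with hj | hj | hj
        · rw [glue2_lt q y2 c _ hj]; exact (congrFun h5 ⟨j, hj⟩).symm
        · rw [hj, glue2_q]; exact h6.symm
        · rw [glue2_gt q y2 c _ hj]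
    refine Finset.sum_nbij'
      (fun z => ((fun jj : {j : Fin n // j < q} => z.2.2.1 jj.1),
                 (fun jj : {j : Fin n // q < j} => z.2.2.2 jj.1)))
      (fun w => (g, Fin.snoc cc a, glue1 q y1 w.1, glue2 q y2 c w.2))
      (fun z _ => mem_univ _) ?_ ?_ ?_ ?_
    · -- maps into the fiber
      intro w _
      refine mem_filter.mpr ⟨mem_univ _, ?_⟩
      rw [hfT]
      dsimp only
      refine Prod.ext ?_
        (Prod.ext (Prod.ext (Prod.ext rfl ?_) (Prod.ext ?_ ?_)) ?_) <;> dsimp only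
      · rw [Fin.snoc_last]
      · funext j
        rw [Fin.snoc_castSucc]
      · exact funext fun jj => glue1_ge q y1 w.1 jj.2
      · exact funext fun jj => glue2_lt q y2 c w.2 jj.2
      · exact glue2_q q y2 c w.2
    · -- left inverse
      intro z hz
      exact jeq z hz
    · -- right inverse
      intro w _
      dsimp only
      refine Prod.ext ?_ ?_ <;> dsimp only
      · funext jj
        rw [glue1_lt q y1 w.1 jj.2]
      · funext jj
        rw [glue2_gt q y2 c w.2 jj.2]
    · intro z hz
      exact (congrArg (pushf μ Zk1) (jeq z hz)).symm
  -- product split of the iid factor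
  have hsplit : ∀ (y1 : {j : Fin n // q ≤ j} → 𝒳₁) (y2 : {j : Fin n // j < q} → 𝒳₂)
      (c : 𝒳₂) (u : {j : Fin n // j < q} → 𝒳₁) (v : {j : Fin n // q < j} → 𝒳₂),
      ∏ j, p (glue1 q y1 u j, glue2 q y2 c v j)
        = (∏ jj : {j : Fin n // j < q}, p (u jj, y2 jj)) *
          (∏ jj : {j : Fin n // ¬ j < q},
            p (y1 ⟨jj.1, not_lt.mp jj.2⟩, glue2 q y2 c v jj.1)) := by
    intro y1 y2 c u v
    rw [← Finset.prod_filter_mul_prod_filter_not univ (fun j : Fin n => j < q)]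
    congr 1
    · rw [Finset.prod_subtype (p := fun j : Fin n => j < q)
        (univ.filter (fun j : Fin n => j < q)) (fun j => by simp)
        (fun j => p (glue1 q y1 u j, glue2 q y2 c v j))]
      refine Finset.prod_congr rfl fun jj _ => ?_
      rw [glue1_lt q y1 u jj.2, glue2_lt q y2 c v jj.2]
    · rw [Finset.prod_subtype (p := fun j : Fin n => ¬ j < q)
        (univ.filter (fun j : Fin n => ¬ j < q)) (fun j => by simp)
        (fun j => p (glue1 q y1 u j, glue2 q y2 c v j))]
      refine Finset.prod_congr rfl fun jj _ => ?_
      rw [glue1_ge q y1 u (not_lt.mp jj.2)]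
  -- the rectangle factorization of P
  set Φ : 𝒞 × βT → ℝ := fun ab =>
    ∑ u : {j : Fin n // j < q} → 𝒳₁,
      K ab.1 ab.2.1.1 ab.2.1.2 (glue1 q ab.2.2.1 u) * φ ab.2.1.1 ab.2.1.2 (glue1 q ab.2.2.1 u) *
        ∏ jj : {j : Fin n // j < q}, p (u jj, ab.2.2.2 jj) with hΦ
  set Ψ : βT × 𝒳₂ → ℝ := fun bc =>
    ∑ v : {j : Fin n // q < j} → 𝒳₂,
      ψ bc.1.1.1 bc.1.1.2 (glue2 q bc.1.2.2 bc.2 v) *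
        ∏ jj : {j : Fin n // ¬ j < q},
          p (bc.1.2.1 ⟨jj.1, not_lt.mp jj.2⟩, glue2 q bc.1.2.2 bc.2 v jj.1) with hΨ
  have hprod : ∀ a b c, P (a, b, c) = Φ (a, b) * Ψ (b, c) := by
    intro a b c
    obtain ⟨⟨g, cc⟩, y1, y2⟩ := b
    rw [hPsum a g cc y1 y2 c, hΦ, hΨ]
    dsimp only
    rw [Finset.sum_mul_sum]
    rw [Fintype.sum_prod_type]
    refine Finset.sum_congr rfl fun u _ => Finset.sum_congr rfl fun v _ => ?_
    rw [hF a g cc (glue1 q y1 u) (glue2 q y2 c v), hsplit y1 y2 c u v]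
    ring
  -- conclude via the forward direction
  rw [show condMI μ (C i)
      (fun ω => ((G ω, (fun j : Fin i.val => C (Fin.castLE i.isLt.le j) ω)),
        ((fun j : {j : Fin n // q ≤ j} => X1 ω j.1),
         (fun j : {j : Fin n // j < q} => X2 ω j.1))))
      (fun ω => X2 ω q)
    = ent (margAB P) + ent (margBC P) - ent P - ent (margB P) from by
      rw [hP, ← hcompT]
      exact condMI_repr μ _ _ _]
  exact cmi_forward P (fun x => pushf_nonneg μ _ hμ.1 x) (fac_of_prod P Φ Ψ hprod)
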